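/- Let C be a set of m × n matrices over 𝔽_q with m ≤ n, such that any two distinct elements of C differ by a matrix of rank at least d (1 ≤ d ≤ m). Then |C| ≤ q^{n(m-d+1)}. -/
import Mathlib

/-- If the first `k` rows of a matrix vanish, its rank is at most `m - k`. -/
lemma rank_le_of_zero_rows {m n k : ℕ} (hk : k ≤ m) {Fq : Type*} [Field Fq]
    (D : Matrix (Fin m) (Fin n) Fq) (hz : ∀ i : Fin m, (i : ℕ) < k → D i = 0) :
    D.rank ≤ m - k := by
  classical
  rw [Matrix.rank_eq_finrank_span_row]
  set g : Fin (m - k) → (Fin n → Fq) := fun j => D ⟨k + j, by omega⟩ with hg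
  have hsub : Set.range D ⊆ insert 0 (Set.range g) := by
    rintro _ ⟨i, rfl⟩
    by_cases h : (i : ℕ) < k
    · exact Or.inl (hz i h)
    · refine Or.inr ⟨⟨(i : ℕ) - k, by omega⟩, ?_⟩
      have heq : (⟨k + ((i : ℕ) - k), by omega⟩ : Fin m) = i := Fin.ext (by simp only [Fin.val_mk]; omega)
      show D _ = D i
      exact congrArg D heq
  calc Module.finrank Fq (Submodule.span Fq (Set.range D))
      ≤ Module.finrank Fq (Submodule.span Fq (insert 0 (Set.range g))) :=
        Submodule.finrank_mono (Submodule.span_mono hsub)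
    _ = Module.finrank Fq (Submodule.span Fq (Set.range g)) := by
        rw [Submodule.span_insert_zero]
    _ ≤ Fintype.card (Fin (m - k)) := finrank_range_le_card g
    _ = m - k := Fintype.card_fin _

/-- Singleton-like bound for rank metric codes. -/
theorem singleton_bound_rank_metric
    (q m n d : ℕ) (hmn : m ≤ n) (hd1 : 1 ≤ d) (hdm : d ≤ m)
    (Fq : Type*) [Field Fq] [Fintype Fq] (hq : Fintype.card Fq = q)
    (C : Set (Matrix (Fin m) (Fin n) Fq))
    (hdist : ∀ A ∈ C, ∀ B ∈ C, A ≠ B → d ≤ (A - B).rank) :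
    Set.ncard C ≤ q ^ (n * (m - d + 1)) := by
  classical
  set k := m - d + 1 with hk
  have hkm : k ≤ m := by omega
  -- the projection onto the first k rows
  set f : C → (Fin k → Fin n → Fq) := fun A i => (A : Matrix (Fin m) (Fin n) Fq) (Fin.castLE hkm i) with hf
  have hinj : Function.Injective f := by
    rintro ⟨A, hA⟩ ⟨B, hB⟩ hAB
    by_contra hne
    have hne' : A ≠ B := fun h => hne (by simpa using h)
    have hzero : ∀ i : Fin m, (i : ℕ) < k → (A - B) i = 0 := by
      intro i hi
      have := congrFun hAB ⟨i, hi⟩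
      simp only [hf] at this
      have : A (Fin.castLE hkm ⟨(i : ℕ), hi⟩) = B (Fin.castLE hkm ⟨(i : ℕ), hi⟩) := this
      have hcast : Fin.castLE hkm ⟨(i : ℕ), hi⟩ = i := by ext; simp
      rw [hcast] at this
      funext j
      simp [Matrix.sub_apply, this]
    have h1 : (A - B).rank ≤ m - k := rank_le_of_zero_rows hkm _ hzero
    have h2 : d ≤ (A - B).rank := hdist A hA B hB hne'
    omega
  have hcard : Set.ncard C ≤ Fintype.card (Fin k → Fin n → Fq) := by
    rw [← Nat.card_coe_set_eq, ← Nat.card_eq_fintype_card]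
    exact Nat.card_le_card_of_injective f hinj
  calc Set.ncard C ≤ Fintype.card (Fin k → Fin n → Fq) := hcard
    _ = q ^ (n * k) := by
        simp [Fintype.card_fun, hq, ← pow_mul, mul_comm k n]
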